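/- Let π : X̃ → X be the blow-up at a point with exceptional divisor D, E a vector bundle on X with P_X(E) = 0, and for real ε = (ε₀,…,ε_n) define P̃_{ε,c}(π^*E) = (Σ_{j=0}^n (π^*[γ_j] + ε_j cl(D)^{n-j}) ⌣ ch(π^*E) ⌣ c) ⌢ [X̃]. Then: P̃_{ε,X̃}(π^*E) = (-1)^{n-1} rk(E) ε₀ + ε_n (ch_n(E) ⌢ [X]); and for 1 ≤ k ≤ n-1 and c ∈ H^{n-k,n-k}(X̃,ℝ), P̃_{ε,c}(π^*E) = P_{π_*c}(E) + ε_n (ch_k(E) ⌣ π_*c) ⌢ [X] + (-1)^{k-1} rk(E) l(c) ε_{n-k}. -/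
import Mathlib


/-- computation of the deformed polynomial slopes on a point blow-up
`π : X̃ → X` with exceptional divisor `D`.  The total cohomology rings of `X` and `X̃` are
abstracted as commutative `ℝ`-algebras `R`, `Rt`, with pullback `pb = π^*` a ring map,
integration functionals `J = (·) ⌢ [X]` and `I = (·) ⌢ [X̃]` (picking the top-degree part),
`D ∈ Rt` the exceptional class, `γ j` the coefficient classes (with `γ n = g` a constant),
`chE j` the Chern character components of the bundle `E` (with `chE 0 = rk`), and the usual
blow-up identities: `I ∘ pb = J` (projection formula), `pb(α) · D^m = 0` for `α` of positive
degree and `m ≥ 1`, `I(D^n) = (-1)^{n-1}` and `I(D^m) = 0` for `m ≠ n`; `J` kills non-top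
degree classes (`hchtop`, `hchc'`); `P_X(E) = 0` (`hPX`).  Then:
`P̃_{ε,X̃}(π^*E) = (-1)^{n-1} rk(E) ε₀ + ε_n (ch_n(E) ⌢ [X])`, and for
`c = π^*c' + (-1)^{n-k} l·D^{n-k} ∈ H^{n-k,n-k}(X̃,ℝ)` with `1 ≤ k ≤ n-1`:
`P̃_{ε,c}(π^*E) = P_{c'}(E) + ε_n (ch_k(E) ⌣ c') ⌢ [X] + (-1)^{k-1} rk(E) l ε_{n-k}`. -/
theorem stmt12 (n k : ℕ) (hn : 2 ≤ n) (hk1 : 1 ≤ k) (hkn : k ≤ n - 1)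
    {R Rt : Type*} [CommRing R] [CommRing Rt] [Algebra ℝ R] [Algebra ℝ Rt]
    (pb : R →ₐ[ℝ] Rt) (I : Rt →ₗ[ℝ] ℝ) (J : R →ₗ[ℝ] ℝ)
    (D : Rt) (γ chE : ℕ → R) (ε : ℕ → ℝ) (rk g : ℝ) (c' : R) (l : ℝ)
    (hpbint : ∀ a : R, I (pb a) = J a)
    (hγn : γ n = algebraMap ℝ R g)
    (hch0 : chE 0 = algebraMap ℝ R rk)
    (hDtop : I (D ^ n) = (-1 : ℝ) ^ (n - 1))
    (hDlow : ∀ m : ℕ, m ≠ n → I (D ^ m) = 0)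
    (hchD : ∀ j, 1 ≤ j → ∀ m, 1 ≤ m → pb (chE j) * D ^ m = 0)
    (hγD : ∀ j < n, ∀ m, 1 ≤ m → pb (γ j) * D ^ m = 0)
    (hc'D : ∀ m, 1 ≤ m → pb c' * D ^ m = 0)
    (hPX : J ((∑ j ∈ Finset.range (n + 1), γ j) * ∑ j ∈ Finset.range (n + 1), chE j) = 0)
    (hchtop : ∀ m, m ≠ n → J (chE m) = 0)
    (hchc' : ∀ j, j ≠ k → J (chE j * c') = 0) :
    (I ((∑ j ∈ Finset.range (n + 1), (pb (γ j) + ε j • D ^ (n - j))) *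
          pb (∑ j ∈ Finset.range (n + 1), chE j))
        = (-1 : ℝ) ^ (n - 1) * rk * ε 0 + ε n * J (chE n)) ∧
    (I ((∑ j ∈ Finset.range (n + 1), (pb (γ j) + ε j • D ^ (n - j))) *
          pb (∑ j ∈ Finset.range (n + 1), chE j) *
          (pb c' + ((-1 : ℝ) ^ (n - k) * l) • D ^ (n - k)))
        = J ((∑ j ∈ Finset.range (n + 1), γ j) * (∑ j ∈ Finset.range (n + 1), chE j) * c')
            + ε n * J (chE k * c') + (-1 : ℝ) ^ (k - 1) * rk * l * ε (n - k)) := by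

  have hkn' : k < n := by omega
  have hnk1 : 1 ≤ n - k := by omega
  have hnkn : n - k ≠ n := by omega
  set Γ := ∑ j ∈ Finset.range (n + 1), γ j with hΓ
  set Ch := ∑ j ∈ Finset.range (n + 1), chE j with hCh
  -- D^m kills everything but the constant term of Ch
  have H1 : ∀ m, 1 ≤ m → pb Ch * D ^ m = rk • D ^ m := by
    intro m hm
    rw [hCh, Finset.sum_range_succ', map_add, add_mul, map_sum, Finset.sum_mul]
    rw [Finset.sum_eq_zero (fun i _ => hchD (i + 1) (by omega) m hm), zero_add,
      hch0, AlgHom.commutes, ← Algebra.smul_def]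
  have H2 : ∀ m, 1 ≤ m → pb Γ * D ^ m = g • D ^ m := by
    intro m hm
    rw [hΓ, Finset.sum_range_succ, map_add, add_mul, map_sum, Finset.sum_mul]
    rw [Finset.sum_eq_zero (fun j hj => hγD j (Finset.mem_range.mp hj) m hm), zero_add,
      hγn, AlgHom.commutes, ← Algebra.smul_def]
  have hS : (∑ j ∈ Finset.range (n + 1), (pb (γ j) + ε j • D ^ (n - j)))
      = pb Γ + ∑ j ∈ Finset.range (n + 1), ε j • D ^ (n - j) := by
    rw [Finset.sum_add_distrib, ← map_sum]
  have hJCh : J Ch = J (chE n) := by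
    rw [hCh, map_sum]
    exact Finset.sum_eq_single_of_mem n (Finset.self_mem_range_succ n)
      (fun i _ hi => hchtop i hi)
  have hJChc' : J (Ch * c') = J (chE k * c') := by
    rw [hCh, Finset.sum_mul, map_sum]
    exact Finset.sum_eq_single_of_mem k (Finset.mem_range.mpr (by omega))
      (fun i _ hi => hchc' i hi)
  constructor
  · rw [hS, add_mul, map_add, ← map_mul, hpbint, hPX, zero_add, Finset.sum_mul, map_sum]
    have hsum : ∀ j ∈ Finset.range (n + 1),
        I (ε j • D ^ (n - j) * pb Ch) =
          (if j = 0 then (-1 : ℝ) ^ (n - 1) * rk * ε 0 else 0) +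
          (if j = n then ε n * J (chE n) else 0) := by
      intro j hj
      rcases eq_or_ne j n with h | hjn
      · subst h
        rw [if_neg (by omega : ¬ j = 0), if_pos rfl, zero_add, Nat.sub_self, pow_zero,
          smul_mul_assoc, one_mul, map_smul, hpbint, hJCh, smul_eq_mul]
      · have hj' : j < n := by
          have := Finset.mem_range.mp hj; omega
        rw [smul_mul_assoc, mul_comm (D ^ (n - j)), H1 (n - j) (by omega),
          smul_smul, map_smul, smul_eq_mul]
        rcases eq_or_ne j 0 with h | hj0
        · subst h
          rw [if_pos rfl, if_neg hjn, add_zero, Nat.sub_zero, hDtop]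
          ring
        · rw [hDlow (n - j) (by omega), if_neg hj0, if_neg hjn]
          ring

    rw [Finset.sum_congr rfl hsum, Finset.sum_add_distrib,
      Finset.sum_ite_eq' (Finset.range (n + 1)) 0,
      Finset.sum_ite_eq' (Finset.range (n + 1)) n,
      if_pos (Finset.mem_range.mpr (by omega)), if_pos (Finset.self_mem_range_succ n)]
  · rw [hS, add_mul, add_mul, mul_add, mul_add, map_add, map_add, map_add]
    -- term 1
    have T1 : I (pb Γ * pb Ch * pb c') = J (Γ * Ch * c') := by
      rw [← map_mul, ← map_mul, hpbint]
    -- term 2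
    have T2 : I (pb Γ * pb Ch * (((-1 : ℝ) ^ (n - k) * l) • D ^ (n - k))) = 0 := by
      rw [mul_smul_comm, mul_assoc, H1 (n - k) hnk1, mul_smul_comm, smul_smul,
        H2 (n - k) hnk1, smul_smul, map_smul, hDlow (n - k) hnkn, smul_zero]
    -- term 3
    have T3 : I ((∑ j ∈ Finset.range (n + 1), ε j • D ^ (n - j)) * pb Ch * pb c')
        = ε n * J (chE k * c') := by
      rw [Finset.sum_mul, Finset.sum_mul, map_sum]
      refine Finset.sum_eq_single_of_mem n (Finset.self_mem_range_succ n) ?_ |>.trans ?_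
      · intro j hj hjn
        have hj' : j < n := by
          have := Finset.mem_range.mp hj; omega
        have h0 : D ^ (n - j) * pb Ch * pb c' = 0 := by
          calc D ^ (n - j) * pb Ch * pb c' = pb Ch * (pb c' * D ^ (n - j)) := by ring
            _ = 0 := by rw [hc'D (n - j) (by omega), mul_zero]
        rw [smul_mul_assoc, smul_mul_assoc, h0, smul_zero, map_zero]
      · rw [Nat.sub_self, pow_zero, smul_mul_assoc, smul_mul_assoc, one_mul, ← map_mul,
          map_smul, hpbint, hJChc', smul_eq_mul]
    -- term 4
    have T4 : I ((∑ j ∈ Finset.range (n + 1), ε j • D ^ (n - j)) * pb Ch *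
          (((-1 : ℝ) ^ (n - k) * l) • D ^ (n - k)))
        = (-1 : ℝ) ^ (k - 1) * rk * l * ε (n - k) := by
      rw [Finset.sum_mul, Finset.sum_mul, map_sum]
      refine Finset.sum_eq_single_of_mem (n - k) (Finset.mem_range.mpr (by omega)) ?_
        |>.trans ?_
      · intro j hj hjnk
        have hj' : j ≤ n := by
          have := Finset.mem_range.mp hj; omega
        rw [smul_mul_assoc, smul_mul_assoc, mul_smul_comm, mul_assoc,
          H1 (n - k) hnk1, mul_smul_comm, ← pow_add, smul_smul, smul_smul, map_smul,
          hDlow ((n - j) + (n - k)) (by omega), smul_eq_mul, mul_zero]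
      · rw [smul_mul_assoc, smul_mul_assoc, mul_smul_comm, mul_assoc,
          H1 (n - k) hnk1, mul_smul_comm, ← pow_add, smul_smul, smul_smul, map_smul]
        have he : n - (n - k) + (n - k) = n := by omega
        rw [he, hDtop, smul_eq_mul]
        have hpar : n - k + (n - 1) = (k - 1) + 2 * (n - k) := by omega
        have : (-1 : ℝ) ^ (n - k) * (-1 : ℝ) ^ (n - 1) = (-1 : ℝ) ^ (k - 1) := by
          rw [← pow_add, hpar, pow_add, pow_mul, neg_one_sq, one_pow, mul_one]
        linear_combination rk * l * ε (n - k) * this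
    rw [T1, T2, T3, T4, add_zero, add_assoc]
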